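/- The entrywise exponential of a positive semidefinite Hermitian n×n complex matrix is positive semidefinite: if A is Hermitian positive semidefinite, then the matrix with entries exp(A_{ik}) is also Hermitian positive semidefinite. -/

import Mathlib

open scoped ComplexOrder
open scoped Matrix

private lemma cexp_eq_tsum (z : ℂ) : Complex.exp z = ∑' m : ℕ, z ^ m / m.factorial := by
  rw [Complex.exp_eq_exp_ℂ, NormedSpace.exp_eq_tsum_div]

private lemma summable_exp_series (z : ℂ) : Summable fun m : ℕ => z ^ m / m.factorial :=
  NormedSpace.expSeries_div_summable z

/-- Schur product theorem (quadratic form version). -/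
private lemma schur {n : ℕ} (A B : Matrix (Fin n) (Fin n) ℂ)
    (hA : A.PosSemidef) (hB : B.PosSemidef) (x : Fin n → ℂ) :
    0 ≤ star x ⬝ᵥ (Matrix.of fun i k => A i k * B i k) *ᵥ x := by
  open scoped MatrixOrder in
  obtain ⟨C, hC⟩ := CStarAlgebra.nonneg_iff_eq_star_mul_self.mp hB.nonneg
  rw [Matrix.star_eq_conjTranspose] at hC
  subst hC
  have key : star x ⬝ᵥ (Matrix.of fun i k => A i k * (Cᴴ * C) i k) *ᵥ x
      = ∑ j, star (fun i => C j i * x i) ⬝ᵥ A *ᵥ (fun i => C j i * x i) := by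
    simp only [dotProduct, Matrix.mulVec, Matrix.mul_apply, Matrix.of_apply,
      Pi.star_apply, Matrix.conjTranspose_apply, Finset.mul_sum, Finset.sum_mul]
    refine Eq.trans (Finset.sum_congr rfl fun i _ => Finset.sum_comm) ?_
    rw [Finset.sum_comm]
    refine Finset.sum_congr rfl fun j _ => Finset.sum_congr rfl fun i _ =>
      Finset.sum_congr rfl fun k _ => ?_
    simp only [RCLike.star_def, map_mul]
    ring
  rw [key]
  exact Finset.sum_nonneg fun j _ => hA.dotProduct_mulVec_nonneg _

/-- Hadamard powers of a PSD matrix are PSD. -/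
private lemma hadamard_pow_posSemidef {n : ℕ} (A : Matrix (Fin n) (Fin n) ℂ)
    (hA : A.PosSemidef) (m : ℕ) :
    (Matrix.of fun i k => (A i k) ^ m).PosSemidef := by
  induction m with
  | zero =>
      refine .of_dotProduct_mulVec_nonneg (by ext i k; simp) fun x => ?_
      have : star x ⬝ᵥ (Matrix.of fun i k => (A i k) ^ 0) *ᵥ x
          = star (∑ i, x i) * (∑ i, x i) := by
        simp [dotProduct, Matrix.mulVec, Finset.mul_sum, Finset.sum_mul, mul_comm]
      rw [this]
      exact star_mul_self_nonneg _
  | succ m ih =>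
      refine .of_dotProduct_mulVec_nonneg ?_ ?_
      · ext i k
        simp only [Matrix.conjTranspose_apply, Matrix.of_apply, star_pow]
        rw [hA.1.apply]
      · intro x
        have : (Matrix.of fun i k => (A i k) ^ (m + 1))
            = Matrix.of fun i k => A i k * (Matrix.of fun i k => (A i k) ^ m) i k := by
          ext i k; simp [pow_succ, mul_comm]
        rw [this]
        exact schur A _ hA ih x

/-- The entrywise exponential of a positive semidefinite Hermitian complex matrix
is positive semidefinite. -/
theorem entrywise_exp_posSemidef {n : ℕ} (A : Matrix (Fin n) (Fin n) ℂ)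
    (hA : A.PosSemidef) :
    (Matrix.of fun i k => Complex.exp (A i k)).PosSemidef := by
  refine .of_dotProduct_mulVec_nonneg ?_ ?_
  · ext i k
    simp only [Matrix.conjTranspose_apply, Matrix.of_apply, RCLike.star_def,
      ← Complex.exp_conj]
    congr 1
    rw [← RCLike.star_def, ← Matrix.conjTranspose_apply, hA.1]
  · intro x
    have key : star x ⬝ᵥ (Matrix.of fun i k => Complex.exp (A i k)) *ᵥ x
        = ∑' m : ℕ, ((m.factorial : ℂ))⁻¹ *
            (star x ⬝ᵥ (Matrix.of fun i k => (A i k) ^ m) *ᵥ x) := by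
      have hs : ∀ (i k : Fin n),
          Summable fun m : ℕ => star (x i) * ((A i k) ^ m / m.factorial * x k) :=
        fun i k => (((summable_exp_series (A i k)).mul_right _).mul_left _)
      have h1 : star x ⬝ᵥ (Matrix.of fun i k => Complex.exp (A i k)) *ᵥ x
          = ∑ i, ∑ k, ∑' m : ℕ, star (x i) * ((A i k) ^ m / m.factorial * x k) := by
        simp only [dotProduct, Matrix.mulVec, Matrix.of_apply, Pi.star_apply,
          Finset.mul_sum]
        refine Finset.sum_congr rfl fun i _ => Finset.sum_congr rfl fun k _ => ?_
        rw [cexp_eq_tsum, ← tsum_mul_right, ← tsum_mul_left]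
      rw [h1]
      refine Eq.trans (Finset.sum_congr rfl fun i _ => (Summable.tsum_finsetSum (fun k _ => hs i k)).symm) ?_
      rw [← Summable.tsum_finsetSum (fun i _ => summable_sum (fun k _ => hs i k))]
      refine tsum_congr fun m => ?_
      simp only [dotProduct, Matrix.mulVec, Matrix.of_apply, Pi.star_apply,
        Finset.mul_sum]
      refine Finset.sum_congr rfl fun i _ => Finset.sum_congr rfl fun k _ => ?_
      field_simp
    rw [key]
    refine tsum_nonneg fun m => mul_nonneg ?_ ((hadamard_pow_posSemidef A hA m).dotProduct_mulVec_nonneg x)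
    rw [show ((m.factorial : ℂ))⁻¹ = ((m.factorial : ℝ)⁻¹ : ℝ) by push_cast; ring]
    exact_mod_cast inv_nonneg.mpr (Nat.cast_nonneg _)
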